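/- Let m ≥ 3 be an odd integer. Then F₁(m) is a subgroup of G₁(m) of index 2; every element g of F₁(m) commutes with J, i.e. g ∘ J = J ∘ g; and every element g of G₁(m) not belonging to F₁(m) anticommutes with J, i.e. g(J·x) = -J(g·x) for all x ∈ ℍ. -/

import Mathlib

noncomputable section

open Quaternion Real

/-- The quaternion `i`. -/
def qi : Quaternion ℝ := ⟨0, 1, 0, 0⟩
/-- The quaternion `j`. -/
def qj : Quaternion ℝ := ⟨0, 0, 1, 0⟩
/-- The quaternion `k`. -/
def qk : Quaternion ℝ := ⟨0, 0, 0, 1⟩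
/-- The unit quaternion `e_s = cos(π/s) + sin(π/s) i`. -/
def es (s : ℕ) : Quaternion ℝ := ⟨Real.cos (Real.pi / s), Real.sin (Real.pi / s), 0, 0⟩

lemma norm_eq_one_of_normSq {a : Quaternion ℝ} (h : Quaternion.normSq a = 1) : ‖a‖ = 1 := by
  have h2 : ‖a‖ * ‖a‖ = 1 := by rw [← Quaternion.normSq_eq_norm_mul_self, h]
  rcases mul_self_eq_one_iff.1 h2 with h' | h'
  · exact h'
  · nlinarith [norm_nonneg a]

lemma norm_qi : ‖qi‖ = 1 := norm_eq_one_of_normSq (by rw [Quaternion.normSq_def']; simp [qi])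
lemma norm_qj : ‖qj‖ = 1 := norm_eq_one_of_normSq (by rw [Quaternion.normSq_def']; simp [qj])
lemma norm_qk : ‖qk‖ = 1 := norm_eq_one_of_normSq (by rw [Quaternion.normSq_def']; simp [qk])
lemma norm_es (s : ℕ) : ‖es s‖ = 1 :=
  norm_eq_one_of_normSq (by
    rw [Quaternion.normSq_def']; simp only [es]
    simp [Real.sin_sq_add_cos_sq, Real.cos_sq_add_sin_sq])

lemma self_mul_star_of_norm_one {a : Quaternion ℝ} (h : ‖a‖ = 1) : a * star a = 1 := by
  rw [Quaternion.self_mul_star]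
  have h1 : Quaternion.normSq a = 1 := by rw [Quaternion.normSq_eq_norm_mul_self, h, mul_one]
  rw [h1]; norm_num

lemma star_mul_self_of_norm_one {a : Quaternion ℝ} (h : ‖a‖ = 1) : star a * a = 1 := by
  rw [Quaternion.star_mul_self]
  have h1 : Quaternion.normSq a = 1 := by rw [Quaternion.normSq_eq_norm_mul_self, h, mul_one]
  rw [h1]; norm_num

/-- The rotation `[l,r] : x ↦ l̄ x r` of `ℝ⁴ ≅ ℍ`, for unit quaternions `l, r`. -/
def qrot (l r : Quaternion ℝ) (hl : ‖l‖ = 1) (hr : ‖r‖ = 1) :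
    Quaternion ℝ ≃ₗ[ℝ] Quaternion ℝ where
  toFun x := star l * x * r
  invFun x := l * x * star r
  map_add' x y := by noncomm_ring
  map_smul' c x := by simp [mul_smul_comm, smul_mul_assoc]
  left_inv x := by
    have h : l * (star l * x * r) * star r = (l * star l) * x * (r * star r) := by noncomm_ring
    simp [h, self_mul_star_of_norm_one hl, self_mul_star_of_norm_one hr]
  right_inv x := by
    have h : star l * (l * x * star r) * r = (star l * l) * x * (star r * r) := by noncomm_ring
    simp [h, star_mul_self_of_norm_one hl, star_mul_self_of_norm_one hr]

/-- The group `G₁(m)`. -/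
def G1 (m : ℕ) : Subgroup (Quaternion ℝ ≃ₗ[ℝ] Quaternion ℝ) :=
  Subgroup.closure
    {qrot (es m) 1 (norm_es m) norm_one,
     qrot 1 qi norm_one norm_qi,
     qrot 1 qj norm_one norm_qj,
     qrot qj (es 4) norm_qj (norm_es 4)}

/-- The group `G₂(m)`. -/
def G2 (m : ℕ) : Subgroup (Quaternion ℝ ≃ₗ[ℝ] Quaternion ℝ) :=
  Subgroup.closure
    {qrot (es m) 1 (norm_es m) norm_one,
     qrot 1 qi norm_one norm_qi,
     qrot (es (2 * m)) qj (norm_es (2 * m)) norm_qj,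
     qrot qj (es 4) norm_qj (norm_es 4)}

/-- The group `G₃(m)`. -/
def G3 (m : ℕ) : Subgroup (Quaternion ℝ ≃ₗ[ℝ] Quaternion ℝ) :=
  Subgroup.closure
    {qrot (es m) 1 (norm_es m) norm_one,
     qrot 1 qi norm_one norm_qi,
     qrot qj 1 norm_qj norm_one,
     qrot 1 qj norm_one norm_qj}

/-- The group `F₁(m)`. -/
def F1 (m : ℕ) : Subgroup (Quaternion ℝ ≃ₗ[ℝ] Quaternion ℝ) :=
  Subgroup.closure
    {qrot (es m) qi (norm_es m) norm_qi,
     qrot 1 qj norm_one norm_qj}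

/-- The automorphism `J = [i,1] : x ↦ ī x`. -/
def Jmap : Quaternion ℝ ≃ₗ[ℝ] Quaternion ℝ := qrot qi 1 norm_qi norm_one

/-! ### Auxiliary infrastructure -/

lemma qrot_apply (l r : Quaternion ℝ) (hl hr) (x : Quaternion ℝ) :
    qrot l r hl hr x = star l * x * r := rfl

lemma qrot_mul (l r l' r' : Quaternion ℝ) (hl hr hl' hr') :
    qrot l r hl hr * qrot l' r' hl' hr' =
      qrot (l' * l) (r' * r) (by rw [norm_mul, hl, hl', mul_one])
        (by rw [norm_mul, hr, hr', mul_one]) := by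
  refine LinearEquiv.ext fun x => ?_
  show star l * (star l' * x * r') * r = star (l' * l) * x * (r' * r)
  rw [star_mul]; noncomm_ring

lemma qrot_inv (l r : Quaternion ℝ) (hl hr) :
    (qrot l r hl hr)⁻¹ = qrot (star l) (star r) (by rwa [norm_star]) (by rwa [norm_star]) := by
  refine LinearEquiv.ext fun x => ?_
  show l * x * star r = star (star l) * x * star r
  rw [star_star]

lemma qrot_congr {l r l' r' : Quaternion ℝ} (hl hr hl' hr') (h1 : l = l') (h2 : r = r') :
    qrot l r hl hr = qrot l' r' hl' hr' := by subst h1; subst h2; rfl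

lemma qrot_neg_neg (l r : Quaternion ℝ) (hl hr) :
    qrot (-l) (-r) (by rwa [norm_neg]) (by rwa [norm_neg]) = qrot l r hl hr := by
  refine LinearEquiv.ext fun x => ?_
  show star (-l) * x * (-r) = star l * x * r
  rw [star_neg]; noncomm_ring

lemma qrot_eq_neg {l r l' r' : Quaternion ℝ} (hl hr hl' hr') (h1 : l = -l') (h2 : r = -r') :
    qrot l r hl hr = qrot l' r' hl' hr' := by
  subst h1; subst h2; exact qrot_neg_neg l' r' hl' hr'

lemma qrot_pow (l r : Quaternion ℝ) (hl hr) (n : ℕ) :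
    (qrot l r hl hr) ^ n = qrot (l ^ n) (r ^ n) (by rw [norm_pow, hl, one_pow])
      (by rw [norm_pow, hr, one_pow]) := by
  induction n with
  | zero => refine LinearEquiv.ext fun x => ?_; show x = star 1 * x * 1; simp
  | succ n ih =>
      rw [pow_succ, ih, qrot_mul]
      exact qrot_congr _ _ _ _ (pow_succ' l n).symm (pow_succ' r n).symm

/-- The generators. -/
def ga (m : ℕ) : Quaternion ℝ ≃ₗ[ℝ] Quaternion ℝ := qrot (es m) qi (norm_es m) norm_qi
def gb : Quaternion ℝ ≃ₗ[ℝ] Quaternion ℝ := qrot 1 qj norm_one norm_qj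
def g1' (m : ℕ) : Quaternion ℝ ≃ₗ[ℝ] Quaternion ℝ := qrot (es m) 1 (norm_es m) norm_one
def g2' : Quaternion ℝ ≃ₗ[ℝ] Quaternion ℝ := qrot 1 qi norm_one norm_qi
def gt' : Quaternion ℝ ≃ₗ[ℝ] Quaternion ℝ := qrot qj (es 4) norm_qj (norm_es 4)

lemma F1_eq (m : ℕ) : F1 m = Subgroup.closure {ga m, gb} := rfl
lemma G1_eq (m : ℕ) : G1 m = Subgroup.closure {g1' m, g2', gb, gt'} := rfl

lemma ga_mem (m : ℕ) : ga m ∈ F1 m := Subgroup.subset_closure (Set.mem_insert _ _)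
lemma gb_mem (m : ℕ) : gb ∈ F1 m :=
  Subgroup.subset_closure (Set.mem_insert_of_mem _ rfl)

/-! ### Quaternion computations -/

@[simp] lemma qi_re : qi.re = 0 := rfl
@[simp] lemma qi_imI : qi.imI = 1 := rfl
@[simp] lemma qi_imJ : qi.imJ = 0 := rfl
@[simp] lemma qi_imK : qi.imK = 0 := rfl
@[simp] lemma qj_re : qj.re = 0 := rfl
@[simp] lemma qj_imI : qj.imI = 0 := rfl
@[simp] lemma qj_imJ : qj.imJ = 1 := rfl
@[simp] lemma qj_imK : qj.imK = 0 := rfl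
@[simp] lemma es_re (s : ℕ) : (es s).re = Real.cos (Real.pi / s) := rfl
@[simp] lemma es_imI (s : ℕ) : (es s).imI = Real.sin (Real.pi / s) := rfl
@[simp] lemma es_imJ (s : ℕ) : (es s).imJ = 0 := rfl
@[simp] lemma es_imK (s : ℕ) : (es s).imK = 0 := rfl

lemma qi_mul_qi : qi * qi = -1 := by ext <;> simp [Quaternion.re_mul, Quaternion.imI_mul, Quaternion.imJ_mul, Quaternion.imK_mul]
lemma qj_mul_qj : qj * qj = -1 := by ext <;> simp [Quaternion.re_mul, Quaternion.imI_mul, Quaternion.imJ_mul, Quaternion.imK_mul]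

lemma cos_sin_pow (n : ℕ) (θ : ℝ) :
    (⟨Real.cos θ, Real.sin θ, 0, 0⟩ : Quaternion ℝ) ^ n
      = ⟨Real.cos (n * θ), Real.sin (n * θ), 0, 0⟩ := by
  induction n with
  | zero => ext <;> simp
  | succ n ih =>
      rw [pow_succ, ih]
      push_cast
      ext <;> simp [Quaternion.re_mul, Quaternion.imI_mul, Quaternion.imJ_mul, Quaternion.imK_mul,
        Real.cos_add, Real.sin_add, add_mul] <;> ring

lemma es_pow_self (m : ℕ) (hm : 3 ≤ m) : es m ^ m = -1 := by
  have hm0 : (m : ℝ) ≠ 0 := Nat.cast_ne_zero.mpr (by omega)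
  have hπ : (m : ℝ) * (Real.pi / m) = Real.pi := by field_simp
  show (⟨Real.cos (Real.pi / m), Real.sin (Real.pi / m), 0, 0⟩ : Quaternion ℝ) ^ m = -1
  rw [cos_sin_pow, hπ]
  ext <;> simp

/-! ### Group relations -/

lemma g1'_mul_g2' (m : ℕ) : g1' m * g2' = ga m := by
  unfold g1' g2' ga
  rw [qrot_mul]
  exact qrot_congr _ _ _ _ (one_mul _) (mul_one _)

lemma ga_mul_g2'_inv (m : ℕ) : ga m * g2'⁻¹ = g1' m := by
  unfold g1' g2' ga
  rw [qrot_inv, qrot_mul]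
  exact qrot_congr _ _ _ _ (by simp) (by simp [star_mul_self_of_norm_one norm_qi])

lemma gt'_mul_gt' : gt' * gt' = g2'⁻¹ := by
  unfold gt' g2'
  rw [qrot_mul, qrot_inv]
  refine qrot_eq_neg _ _ _ _ (by simp [qj_mul_qj]) ?_
  have h2 : Real.sqrt 2 ^ 2 = 2 := Real.sq_sqrt (by norm_num)
  ext <;> simp [Quaternion.re_mul, Quaternion.imI_mul, Quaternion.imJ_mul, Quaternion.imK_mul, Real.cos_pi_div_four, Real.sin_pi_div_four] <;> ring_nf <;> nlinarith [h2]

lemma conj_ga (m : ℕ) : gt' * ga m * gt'⁻¹ = (ga m)⁻¹ * (gb * gb) := by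
  unfold gt' ga gb
  rw [qrot_inv, qrot_mul, qrot_mul, qrot_inv, qrot_mul, qrot_mul]
  refine qrot_congr _ _ _ _ ?_ ?_
  · ext <;> simp [Quaternion.re_mul, Quaternion.imI_mul, Quaternion.imJ_mul, Quaternion.imK_mul]
  · ext <;> simp [Quaternion.re_mul, Quaternion.imI_mul, Quaternion.imJ_mul, Quaternion.imK_mul] <;> ring_nf <;>
      nlinarith [Real.sq_sqrt (by norm_num : (0:ℝ) ≤ 2), Real.cos_pi_div_four,
        Real.sin_pi_div_four]

lemma conj_ga' (m : ℕ) : gt'⁻¹ * ga m * gt' = (ga m)⁻¹ * (gb * gb) := by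
  unfold gt' ga gb
  rw [qrot_inv, qrot_mul, qrot_mul, qrot_inv, qrot_mul, qrot_mul]
  refine qrot_congr _ _ _ _ ?_ ?_
  · ext <;> simp [Quaternion.re_mul, Quaternion.imI_mul, Quaternion.imJ_mul, Quaternion.imK_mul]
  · ext <;> simp [Quaternion.re_mul, Quaternion.imI_mul, Quaternion.imJ_mul, Quaternion.imK_mul] <;> ring_nf <;>
      nlinarith [Real.sq_sqrt (by norm_num : (0:ℝ) ≤ 2), Real.cos_pi_div_four,
        Real.sin_pi_div_four]

lemma conj_gb : gt' * gb * gt'⁻¹ = g2'⁻¹ * gb⁻¹ := by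
  unfold gt' gb g2'
  rw [qrot_inv, qrot_mul, qrot_mul, qrot_inv, qrot_inv, qrot_mul]
  refine qrot_congr _ _ _ _ ?_ ?_
  · ext <;> simp
  · ext <;> simp [Quaternion.re_mul, Quaternion.imI_mul, Quaternion.imJ_mul, Quaternion.imK_mul, Real.cos_pi_div_four, Real.sin_pi_div_four] <;> ring_nf <;>
      nlinarith [Real.sq_sqrt (by norm_num : (0:ℝ) ≤ 2)]

lemma conj_gb' : gt'⁻¹ * gb * gt' = gb * g2' := by
  unfold gt' gb g2'
  rw [qrot_inv, qrot_mul, qrot_mul, qrot_mul]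
  refine qrot_congr _ _ _ _ ?_ ?_
  · ext <;> simp
  · ext <;> simp [Quaternion.re_mul, Quaternion.imI_mul, Quaternion.imJ_mul, Quaternion.imK_mul, Real.cos_pi_div_four, Real.sin_pi_div_four] <;> ring_nf <;>
      nlinarith [Real.sq_sqrt (by norm_num : (0:ℝ) ≤ 2)]

lemma ga_comm_J (m : ℕ) : ga m * Jmap = Jmap * ga m := by
  unfold ga Jmap
  rw [qrot_mul, qrot_mul]
  refine qrot_congr _ _ _ _ ?_ (by simp)
  ext <;> simp [Quaternion.re_mul, Quaternion.imI_mul, Quaternion.imJ_mul, Quaternion.imK_mul] <;> ring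

lemma gb_comm_J : gb * Jmap = Jmap * gb := by
  unfold gb Jmap
  rw [qrot_mul, qrot_mul]
  exact qrot_congr _ _ _ _ (by simp) (by simp)

lemma gt'_anti_J (x : Quaternion ℝ) : gt' (Jmap x) = - Jmap (gt' x) := by
  have h : star qj * star qi = -(star qi * star qj) := by ext <;> simp
  show star qj * (star qi * x * 1) * es 4 = -(star qi * (star qj * x * es 4) * 1)
  calc star qj * (star qi * x * 1) * es 4 = (star qj * star qi) * x * es 4 := by noncomm_ring
    _ = -(star qi * star qj) * x * es 4 := by rw [h]
    _ = -(star qi * (star qj * x * es 4) * 1) := by noncomm_ring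

/-! ### Membership lemmas -/

lemma g2'_mem_F1 (m : ℕ) (hm : 3 ≤ m) (hodd : Odd m) : g2' ∈ F1 m := by
  have hmem : (ga m) ^ m ∈ F1 m := pow_mem (ga_mem m) m
  obtain ⟨k, hk⟩ := hodd
  have hqim : qi ^ m = (-1) ^ k * qi := by
    rw [hk, pow_add, pow_mul, pow_one, sq, qi_mul_qi]
  have hpow : (ga m) ^ m = qrot (es m ^ m) (qi ^ m)
      (by rw [norm_pow, norm_es, one_pow]) (by rw [norm_pow, norm_qi, one_pow]) := by
    unfold ga; rw [qrot_pow]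
  rcases Nat.even_or_odd k with he | ho
  · have h1 : (ga m) ^ m = g2'⁻¹ := by
      rw [hpow]
      unfold g2'
      rw [qrot_inv]
      refine qrot_eq_neg _ _ _ _ ?_ ?_
      · simp [es_pow_self m hm]
      · rw [hqim, he.neg_one_pow, one_mul]; ext <;> simp
    have : g2' = ((ga m) ^ m)⁻¹ := by rw [h1, inv_inv]
    rw [this]; exact inv_mem hmem
  · have h1 : (ga m) ^ m = g2' := by
      rw [hpow]
      unfold g2'
      refine qrot_eq_neg _ _ _ _ ?_ ?_
      · exact es_pow_self m hm
      · rw [hqim, ho.neg_one_pow, neg_one_mul]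
    rw [← h1]; exact hmem

lemma g1'_mem_F1 (m : ℕ) (hm : 3 ≤ m) (hodd : Odd m) : g1' m ∈ F1 m := by
  rw [← ga_mul_g2'_inv m]
  exact mul_mem (ga_mem m) (inv_mem (g2'_mem_F1 m hm hodd))

lemma F1_le_G1 (m : ℕ) : F1 m ≤ G1 m := by
  rw [F1_eq, G1_eq]
  refine (Subgroup.closure_le _).mpr ?_
  intro x hx
  rcases hx with rfl | hx
  · rw [← g1'_mul_g2' m]
    exact mul_mem (Subgroup.subset_closure (Set.mem_insert _ _))
      (Subgroup.subset_closure (Set.mem_insert_of_mem _ (Set.mem_insert _ _)))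
  · rcases hx with rfl
    exact Subgroup.subset_closure
      (Set.mem_insert_of_mem _ (Set.mem_insert_of_mem _ (Set.mem_insert _ _)))

lemma gt'_mem_G1 (m : ℕ) : gt' ∈ G1 m := by
  rw [G1_eq]
  exact Subgroup.subset_closure
    (Set.mem_insert_of_mem _ (Set.mem_insert_of_mem _ (Set.mem_insert_of_mem _ rfl)))

lemma F1_comm_J (m : ℕ) : ∀ g ∈ F1 m, g * Jmap = Jmap * g := by
  intro g hg
  have hle : F1 m ≤ Subgroup.centralizer {Jmap} := by
    rw [F1_eq]
    refine (Subgroup.closure_le _).mpr ?_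
    intro x hx
    rw [SetLike.mem_coe, Subgroup.mem_centralizer_iff]
    intro h hh
    rcases hh with rfl
    rcases hx with rfl | hx
    · exact (ga_comm_J m).symm
    · rcases hx with rfl
      exact gb_comm_J.symm
  exact (Subgroup.mem_centralizer_iff.mp (hle hg) Jmap rfl).symm

lemma conj_mem_F1 (m : ℕ) (hm : 3 ≤ m) (hodd : Odd m) : ∀ f ∈ F1 m, gt' * f * gt'⁻¹ ∈ F1 m := by
  intro f hf
  have hle : F1 m ≤ Subgroup.comap (MulAut.conj gt').toMonoidHom (F1 m) := by
    rw [F1_eq]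
    refine (Subgroup.closure_le _).mpr ?_
    intro x hx
    rcases hx with rfl | hx
    · show gt' * ga m * gt'⁻¹ ∈ F1 m
      rw [conj_ga m]
      exact mul_mem (inv_mem (ga_mem m)) (mul_mem (gb_mem m) (gb_mem m))
    · rcases hx with rfl
      show gt' * gb * gt'⁻¹ ∈ F1 m
      rw [conj_gb]
      exact mul_mem (inv_mem (g2'_mem_F1 m hm hodd)) (inv_mem (gb_mem m))
  exact hle hf

lemma conj_mem_F1' (m : ℕ) (hm : 3 ≤ m) (hodd : Odd m) : ∀ f ∈ F1 m, gt'⁻¹ * f * gt' ∈ F1 m := by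
  intro f hf
  have hle : F1 m ≤ Subgroup.comap (MulAut.conj gt'⁻¹).toMonoidHom (F1 m) := by
    rw [F1_eq]
    refine (Subgroup.closure_le _).mpr ?_
    intro x hx
    rcases hx with rfl | hx
    · show gt'⁻¹ * ga m * gt'⁻¹⁻¹ ∈ F1 m
      rw [inv_inv, conj_ga' m]
      exact mul_mem (inv_mem (ga_mem m)) (mul_mem (gb_mem m) (gb_mem m))
    · rcases hx with rfl
      show gt'⁻¹ * gb * gt'⁻¹⁻¹ ∈ F1 m
      rw [inv_inv, conj_gb']
      exact mul_mem (gb_mem m) (g2'_mem_F1 m hm hodd)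
  have := hle hf
  rwa [Subgroup.mem_comap] at this


/-- `F₁(m)` is an index-two subgroup of `G₁(m)`; its elements commute with `J`,
while the elements of `G₁(m) \ F₁(m)` anticommute with `J`. -/


theorem F1_index_two_and_J (m : ℕ) (hm : 3 ≤ m) (hodd : Odd m) :
    F1 m ≤ G1 m ∧ (F1 m).relIndex (G1 m) = 2 ∧
    (∀ g ∈ F1 m, g * Jmap = Jmap * g) ∧
    (∀ g ∈ G1 m, g ∉ F1 m → ∀ x : Quaternion ℝ, g (Jmap x) = - Jmap (g x)) := by
  -- the coset decomposition subgroup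
  have gt2 : gt' * gt' ∈ F1 m := by
    rw [gt'_mul_gt']; exact inv_mem (g2'_mem_F1 m hm hodd)
  have gtnm : gt' ∉ F1 m := by
    intro h
    have hc := F1_comm_J m gt' h
    have h1 : gt' (Jmap 1) = Jmap (gt' 1) := DFunLike.congr_fun hc 1
    have h2 : Jmap (gt' 1) = - Jmap (gt' 1) := h1.symm.trans (gt'_anti_J 1)
    have h3 : Jmap (gt' 1) = 0 := by
      have h4 : (2 : ℝ) • Jmap (gt' 1) = 0 := by
        rw [two_smul]; exact eq_neg_iff_add_eq_zero.mp h2 ▸ (eq_neg_iff_add_eq_zero.mp h2)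
      rcases smul_eq_zero.mp h4 with h5 | h5
      · norm_num at h5
      · exact h5
    have h4 : gt' (1 : Quaternion ℝ) = 0 := by
      have := Jmap.injective (h3.trans (map_zero Jmap).symm)
      exact this
    exact one_ne_zero (gt'.injective (h4.trans (map_zero gt').symm))
  let K : Subgroup (Quaternion ℝ ≃ₗ[ℝ] Quaternion ℝ) :=
    { carrier := {g | g ∈ F1 m ∨ g * gt'⁻¹ ∈ F1 m}
      one_mem' := Or.inl (one_mem _)
      mul_mem' := by
        rintro a b (ha | ha) (hb | hb)
        · exact Or.inl (mul_mem ha hb)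
        · refine Or.inr ?_
          have : a * b * gt'⁻¹ = a * (b * gt'⁻¹) := by group
          rw [this]; exact mul_mem ha hb
        · refine Or.inr ?_
          have : a * b * gt'⁻¹ = (a * gt'⁻¹) * (gt' * b * gt'⁻¹) := by group
          rw [this]; exact mul_mem ha (conj_mem_F1 m hm hodd b hb)
        · refine Or.inl ?_
          have : a * b = (a * gt'⁻¹) * (gt' * (b * gt'⁻¹) * gt'⁻¹) * (gt' * gt') := by group
          rw [this]
          exact mul_mem (mul_mem ha (conj_mem_F1 m hm hodd _ hb)) gt2
      inv_mem' := by
        rintro a (ha | ha)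
        · exact Or.inl (inv_mem ha)
        · refine Or.inr ?_
          have : a⁻¹ * gt'⁻¹ = (gt'⁻¹ * (a * gt'⁻¹)⁻¹ * gt') * (gt' * gt')⁻¹ := by group
          rw [this]
          exact mul_mem (conj_mem_F1' m hm hodd _ (inv_mem ha)) (inv_mem gt2) }
  have hKmem : ∀ g, g ∈ K ↔ (g ∈ F1 m ∨ g * gt'⁻¹ ∈ F1 m) := fun g => Iff.rfl
  have coset : ∀ g ∈ G1 m, g ∈ F1 m ∨ ∃ f ∈ F1 m, g = f * gt' := by
    have hle : G1 m ≤ K := by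
      rw [G1_eq]
      refine (Subgroup.closure_le _).mpr ?_
      intro x hx
      rcases hx with rfl | hx
      · exact Or.inl (g1'_mem_F1 m hm hodd)
      rcases hx with rfl | hx
      · exact Or.inl (g2'_mem_F1 m hm hodd)
      rcases hx with rfl | hx
      · exact Or.inl (gb_mem m)
      rcases hx with rfl
      · refine Or.inr ?_
        rw [mul_inv_cancel]
        exact one_mem _
    intro g hg
    rcases (hKmem g).mp (hle hg) with h | h
    · exact Or.inl h
    · exact Or.inr ⟨g * gt'⁻¹, h, by group⟩
  refine ⟨F1_le_G1 m, ?_, F1_comm_J m, ?_⟩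
  · show ((F1 m).subgroupOf (G1 m)).index = 2
    rw [Subgroup.index_eq_two_iff]
    refine ⟨⟨gt', gt'_mem_G1 m⟩, fun b => ?_⟩
    rcases coset (b : Quaternion ℝ ≃ₗ[ℝ] Quaternion ℝ) b.2 with hb | ⟨f, hf, hbe⟩
    · refine Or.inr ⟨(Subgroup.mem_subgroupOf).mpr hb, fun hc => ?_⟩
      have h1 : (b : Quaternion ℝ ≃ₗ[ℝ] Quaternion ℝ) * gt' ∈ F1 m :=
        (Subgroup.mem_subgroupOf).mp hc
      have : gt' = (b : Quaternion ℝ ≃ₗ[ℝ] Quaternion ℝ)⁻¹ *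
          ((b : Quaternion ℝ ≃ₗ[ℝ] Quaternion ℝ) * gt') := by group
      exact gtnm (this ▸ mul_mem (inv_mem hb) h1)
    · refine Or.inl ⟨(Subgroup.mem_subgroupOf).mpr ?_, fun hc => ?_⟩
      · show (b : Quaternion ℝ ≃ₗ[ℝ] Quaternion ℝ) * gt' ∈ F1 m
        rw [hbe, mul_assoc]
        exact mul_mem hf gt2
      · have h1 : (b : Quaternion ℝ ≃ₗ[ℝ] Quaternion ℝ) ∈ F1 m :=
          (Subgroup.mem_subgroupOf).mp hc
        have : gt' = f⁻¹ * (b : Quaternion ℝ ≃ₗ[ℝ] Quaternion ℝ) := by rw [hbe]; group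
        exact gtnm (this ▸ mul_mem (inv_mem hf) h1)
  · intro g hg hgn x
    rcases coset g hg with h | ⟨f, hf, hbe⟩
    · exact absurd h hgn
    have hfc : ∀ y, f (Jmap y) = Jmap (f y) := fun y => DFunLike.congr_fun (F1_comm_J m f hf) y
    have h1 : g (Jmap x) = f (gt' (Jmap x)) := by rw [hbe]; rfl
    rw [h1, gt'_anti_J x, map_neg, hfc]
    have h2 : g x = f (gt' x) := by rw [hbe]; rfl
    rw [h2]
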